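/- Let x = ∏_{i=1}^{m−1} cos²θ_i, y = ∏_{i=1}^{m−1} sin²θ_i, z = ∏_{i=1}^{m−1} sin(2θ_i) for real θ_1,…,θ_{m−1}, and let 0 < α < 2^{m−1}/(2^{m−1}−1). Then (1/2)·(α(x+y) + sqrt(α²(x−y)² + 4z²)) ≤ α/2^{m−1} + 1. -/

import Mathlib

set_option maxHeartbeats 1000000

open Real Finset

private lemma my_le_of_sq (u v : ℝ) (hv : 0 ≤ v) (h : u^2 ≤ v^2) : u ≤ v := by
  nlinarith [sq_nonneg (u - v), sq_nonneg (u + v)]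

private lemma core_ineq (M D L t : ℝ) (hM : 2 ≤ M) (hD0 : 0 ≤ D) (hD1 : D ≤ 1)
    (ht1 : -1 ≤ t) (ht2 : t ≤ 1)
    (hL2 : L^2 ≤ (M - (M-2)*D)^2 - 4*D) :
    t * L ≤ M*(1-D) + (2*M-2)*(D*t^2) := by
  have hA : 0 ≤ M*(1-D) := mul_nonneg (by linarith) (by linarith)
  have hB : 0 ≤ (2*M-2)*(D*t^2) := mul_nonneg (by linarith) (mul_nonneg hD0 (sq_nonneg t))
  rcases le_or_gt (L^2) (4*M*(2*M-2)*(D*(1-D))) with hcase | hcase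
  · have h2 : (t*L)^2 ≤ (M*(1-D) + (2*M-2)*(D*t^2))^2 := by
      nlinarith [mul_le_mul_of_nonneg_left hcase (sq_nonneg t),
        sq_nonneg (M*(1-D) - (2*M-2)*(D*t^2))]
    exact my_le_of_sq _ _ (by linarith) h2
  · have h1 : 0 < (1 - D) * (M^2 - (3*M-2)^2 * D) := by nlinarith [hL2, hcase]
    have h2 : 0 < M^2 - (3*M-2)^2 * D := by
      nlinarith [h1, (by linarith : (0:ℝ) ≤ 1 - D)]
    have h3 : (3*M-2)*D < M := by
      nlinarith [h2, (by linarith : (0:ℝ) < 3*M-2)]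
    have hcD : (2*M-2)*D < M*(1-D) := by nlinarith [h3]
    have hL4 : (2*((2*M-2)*D))^2 ≤ L^2 := by
      nlinarith [hcase, mul_nonneg (mul_nonneg (by linarith : (0:ℝ) ≤ 2*M-2) hD0)
        (by linarith : (0:ℝ) ≤ M*(1-D) - (2*M-2)*D)]
    have habs : t * L ≤ |t| * |L| := by rw [← abs_mul]; exact le_abs_self _
    have hs1 : |t| ≤ 1 := abs_le.mpr ⟨ht1, ht2⟩
    have hs0 : 0 ≤ |t| := abs_nonneg t
    have hΛ0 : 0 ≤ |L| := abs_nonneg L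
    have hΛR : |L| ≤ M - (M-2)*D := by
      apply my_le_of_sq _ _ (by nlinarith [mul_nonneg (by linarith : (0:ℝ) ≤ M-2) hD0])
      rw [sq_abs]; nlinarith [hL2]
    have hΛc : 2*((2*M-2)*D) ≤ |L| := my_le_of_sq _ _ hΛ0 (by rw [sq_abs]; exact hL4)
    have hstep : 0 ≤ |L| - (2*M-2)*D*(|t|+1) := by
      nlinarith [hΛc, mul_nonneg (mul_nonneg (by linarith : (0:ℝ) ≤ 2*M-2) hD0)
        (by linarith : (0:ℝ) ≤ 1 - |t|)]
    have hprod : 0 ≤ (1-|t|) * (|L| - (2*M-2)*D*(|t|+1)) :=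
      mul_nonneg (by linarith) hstep
    have hMD : 0 ≤ (M-2)*D := mul_nonneg (by linarith) hD0
    have hid : M*(1-D) + (2*M-2)*(D*(|t|^2)) - (|t| * |L|)
        = (M + (M-2)*D - |L|) + (1-|t|)*(|L| - (2*M-2)*D*(|t|+1)) := by ring
    have hfin : |t| * |L| ≤ M*(1-D) + (2*M-2)*(D*(|t|^2)) := by linarith [hid, hprod, hΛR, hMD]
    have hsq : |t|^2 = t^2 := sq_abs t
    rw [hsq] at hfin
    linarith

private lemma step_ineq (M P Q b : ℝ) (hM : 2 ≤ M) (hP : 0 ≤ P) (hQ : 0 ≤ Q)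
    (hPQ1 : P * Q ≤ 1)
    (hIH : P + Q + (M - 2) * (P * Q) ≤ M) (hb0 : 0 ≤ b) (hb2 : b ≤ 2) :
    b * P + (2 - b) * Q + (2 * M - 2) * ((b * (2 - b)) * (P * Q)) ≤ 2 * M := by
  have hR : P + Q ≤ M - (M-2)*(P*Q) := by linarith
  have hR2 : (2:ℝ) ≤ M - (M-2)*(P*Q) := by
    nlinarith [mul_nonneg (by linarith : (0:ℝ) ≤ M-2) (by linarith : (0:ℝ) ≤ 1 - P*Q)]
  have hL2 : (P-Q)^2 ≤ (M - (M-2)*(P*Q))^2 - 4*(P*Q) := by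
    nlinarith [mul_nonneg (by linarith : (0:ℝ) ≤ M - (M-2)*(P*Q) - (P+Q))
      (by linarith : (0:ℝ) ≤ M - (M-2)*(P*Q) + (P+Q))]
  have hcore := core_ineq M (P*Q) (P-Q) (b-1) hM (mul_nonneg hP hQ) hPQ1
    (by linarith) (by linarith) hL2
  nlinarith [hcore, hIH]

private lemma key_ineq {ι : Type*} (s : Finset ι) (a : ι → ℝ)
    (h0 : ∀ i ∈ s, 0 ≤ a i) (h2 : ∀ i ∈ s, a i ≤ 2) :
    (∏ i ∈ s, a i) + (∏ i ∈ s, (2 - a i)) +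
      ((2:ℝ) ^ s.card - 2) * ∏ i ∈ s, (a i * (2 - a i)) ≤ 2 ^ s.card := by
  induction s using Finset.cons_induction with
  | empty => norm_num
  | cons i s hi ih =>
    have h0i : 0 ≤ a i := h0 i (Finset.mem_cons_self i s)
    have h2i : a i ≤ 2 := h2 i (Finset.mem_cons_self i s)
    have h0' : ∀ j ∈ s, 0 ≤ a j := fun j hj => h0 j (Finset.mem_cons_of_mem hj)
    have h2' : ∀ j ∈ s, a j ≤ 2 := fun j hj => h2 j (Finset.mem_cons_of_mem hj)
    rw [Finset.prod_cons, Finset.prod_cons, Finset.prod_cons, Finset.card_cons, pow_succ]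
    rcases s.eq_empty_or_nonempty with rfl | hne
    · simp
    · have hcard : 1 ≤ s.card := hne.card_pos
      have hM : (2:ℝ) ≤ 2 ^ s.card := by
        calc (2:ℝ) = 2^1 := (pow_one 2).symm
        _ ≤ 2 ^ s.card := pow_le_pow_right₀ one_le_two hcard
      have hP0 : 0 ≤ ∏ j ∈ s, a j := Finset.prod_nonneg h0'
      have hQ0 : 0 ≤ ∏ j ∈ s, (2 - a j) := Finset.prod_nonneg (fun j hj => by linarith [h2' j hj])
      have hPQ : (∏ j ∈ s, a j) * (∏ j ∈ s, (2 - a j)) = ∏ j ∈ s, (a j * (2 - a j)) :=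
        (Finset.prod_mul_distrib).symm
      have hD1 : (∏ j ∈ s, (a j * (2 - a j))) ≤ 1 := by
        apply Finset.prod_le_one
        · exact fun j hj => mul_nonneg (h0' j hj) (by linarith [h2' j hj])
        · exact fun j hj => by nlinarith [h0' j hj, h2' j hj, sq_nonneg (a j - 1)]
      have hIH : (∏ j ∈ s, a j) + (∏ j ∈ s, (2 - a j)) +
          ((2:ℝ) ^ s.card - 2) * ((∏ j ∈ s, a j) * (∏ j ∈ s, (2 - a j))) ≤ 2 ^ s.card := by
        rw [hPQ]; exact ih h0' h2'
      have hst := step_ineq ((2:ℝ) ^ s.card) (∏ j ∈ s, a j) (∏ j ∈ s, (2 - a j)) (a i)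
        hM hP0 hQ0 (by rw [hPQ]; exact hD1) hIH h0i h2i
      rw [hPQ] at hst
      linarith

/-- With `x = ∏cos²θᵢ`, `y = ∏sin²θᵢ`, `z = ∏sin(2θᵢ)` and `0 < α < 2^{m−1}/(2^{m−1}−1)`,
`(1/2)(α(x+y) + √(α²(x−y)² + 4z²)) ≤ α/2^{m−1} + 1`. -/
theorem stmt4 (m : ℕ) (hm : 2 ≤ m) (θ : Fin (m - 1) → ℝ) (α : ℝ)
    (hα0 : 0 < α) (hα : α < (2 : ℝ) ^ (m - 1) / ((2 : ℝ) ^ (m - 1) - 1)) :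
    (1 / 2) * (α * ((∏ i, Real.cos (θ i) ^ 2) + ∏ i, Real.sin (θ i) ^ 2)
      + Real.sqrt (α ^ 2 * ((∏ i, Real.cos (θ i) ^ 2) - ∏ i, Real.sin (θ i) ^ 2) ^ 2
        + 4 * (∏ i, Real.sin (2 * θ i)) ^ 2)) ≤ α / (2 : ℝ) ^ (m - 1) + 1 := by
  have hn1 : 1 ≤ m - 1 := by omega
  set x := ∏ i, Real.cos (θ i) ^ 2 with hx
  set y := ∏ i, Real.sin (θ i) ^ 2 with hy
  set z := ∏ i, Real.sin (2 * θ i) with hz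
  set N := (2:ℝ) ^ (m - 1) with hNdef
  have hN2 : (2:ℝ) ≤ N := by
    calc (2:ℝ) = 2^1 := (pow_one 2).symm
    _ ≤ 2 ^ (m - 1) := pow_le_pow_right₀ one_le_two hn1
  have hN0 : (0:ℝ) < N := by linarith
  -- product identities
  have hcard : (Finset.univ : Finset (Fin (m - 1))).card = m - 1 := by simp
  have e1 : ∏ i, (2 * Real.cos (θ i) ^ 2) = N * x := by
    rw [Finset.prod_mul_distrib, Finset.prod_const, hcard, hx, hNdef]
  have e2 : ∏ i, (2 - 2 * Real.cos (θ i) ^ 2) = N * y := by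
    have : ∀ i : Fin (m - 1), 2 - 2 * Real.cos (θ i) ^ 2 = 2 * Real.sin (θ i) ^ 2 := by
      intro i; have := Real.sin_sq_add_cos_sq (θ i); nlinarith
    rw [Finset.prod_congr rfl (fun i _ => this i), Finset.prod_mul_distrib,
      Finset.prod_const, hcard, hy, hNdef]
  have e3 : ∏ i, ((2 * Real.cos (θ i) ^ 2) * (2 - 2 * Real.cos (θ i) ^ 2)) = z ^ 2 := by
    have : ∀ i : Fin (m - 1), (2 * Real.cos (θ i) ^ 2) * (2 - 2 * Real.cos (θ i) ^ 2)
        = Real.sin (2 * θ i) ^ 2 := by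
      intro i
      have h1 := Real.sin_sq_add_cos_sq (θ i)
      rw [Real.sin_two_mul]; nlinarith
    rw [Finset.prod_congr rfl (fun i _ => this i), hz, Finset.prod_pow]
  have hkey0 := key_ineq (Finset.univ : Finset (Fin (m - 1))) (fun i => 2 * Real.cos (θ i) ^ 2)
    (fun i _ => by positivity)
    (fun i _ => by beta_reduce; nlinarith [Real.cos_sq_le_one (θ i)])
  rw [hcard] at hkey0
  beta_reduce at hkey0
  rw [e1, e2, e3] at hkey0
  -- hkey0 : N*x + N*y + (N-2)*z^2 ≤ N
  have hzz : (N*x) * (N*y) = z^2 := by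
    rw [← e1, ← e2, ← e3]; exact (Finset.prod_mul_distrib).symm
  have hx0 : 0 ≤ x := Finset.prod_nonneg (fun i _ => sq_nonneg _)
  have hy0 : 0 ≤ y := Finset.prod_nonneg (fun i _ => sq_nonneg _)
  have hz20 : 0 ≤ z^2 := sq_nonneg z
  have hz1 : z^2 ≤ 1 := by
    have hzsq : z^2 = ∏ i, Real.sin (2 * θ i) ^ 2 := by rw [hz, Finset.prod_pow]
    rw [hzsq]
    exact Finset.prod_le_one (fun i _ => sq_nonneg _) (fun i _ => Real.sin_sq_le_one _)
  have hαN : α * (N - 1) < N := by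
    have h1 : (0:ℝ) < N - 1 := by linarith
    have := (lt_div_iff₀ h1).mp hα
    linarith
  -- main inequality
  have hβN : (α / N) * N = α := div_mul_cancel₀ α (ne_of_gt hN0)
  have hβ0 : 0 ≤ α / N := by positivity
  have hβ1 : (α / N) * (N - 1) ≤ 1 := by
    rw [div_mul_eq_mul_div, div_le_one hN0]; linarith
  have e4 : N*x + N*y - 2 ≤ (N - 2) * (1 - z^2) := by nlinarith [hkey0]
  have e5 : (α/N) * (N*x + N*y - 2) ≤ (α/N) * ((N-2)*(1-z^2)) :=
    mul_le_mul_of_nonneg_left e4 hβ0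
  have e6 : (α/N) * ((N-2)*(1-z^2)) ≤ (1-α/N)*(1-z^2) := by
    have h1 : 0 ≤ 1 - z^2 := by linarith
    have h2 : (α/N)*(N-2) ≤ 1 - α/N := by linarith [hβ1]
    calc (α/N) * ((N-2)*(1-z^2)) = ((α/N)*(N-2)) * (1-z^2) := by ring
    _ ≤ (1-α/N)*(1-z^2) := mul_le_mul_of_nonneg_right h2 h1
  have hE : 0 ≤ (1-α/N)*(1-z^2) - (α/N)*(N*x+N*y-2) := by linarith
  have hEE : 0 ≤ (1+α/N) * ((1-α/N)*(1-z^2) - (α/N)*(N*x+N*y-2)) :=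
    mul_nonneg (by linarith) hE
  have hmain : z^2 ≤ (α/N + 1 - α*x) * (α/N + 1 - α*y) := by
    obtain ⟨β, hβdef⟩ : ∃ b : ℝ, b = α / N := ⟨_, rfl⟩
    have hαβ : α = β * N := by rw [hβdef]; field_simp
    rw [← hβdef, hαβ]
    have hid : (β + 1 - β*N*x) * (β + 1 - β*N*y) - z^2
        = (1+β) * ((1-β)*(1-z^2) - β*(N*x+N*y-2))
          + β^2 * ((N*x)*(N*y) - z^2) := by ring
    have hzz' : (N*x)*(N*y) - z^2 = 0 := by linarith [hzz]
    rw [hzz', mul_zero, add_zero] at hid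
    have hEβ : 0 ≤ (1-β)*(1-z^2) - β*(N*x+N*y-2) := by rw [hβdef]; exact hE
    have hEEβ : 0 ≤ (1+β) * ((1-β)*(1-z^2) - β*(N*x+N*y-2)) := by
      apply mul_nonneg _ hEβ
      rw [hβdef]; linarith
    linarith [hid, hEEβ]
  -- finishing
  have hxy1 : x + y ≤ 1 := by
    have h1 : 0 ≤ (N-2) * z^2 := mul_nonneg (by linarith) hz20
    nlinarith [hkey0, hN0]
  have hα2 : α ≤ 2 := by nlinarith [hαN, hN2]
  have h2K : α*(x+y) ≤ 2*(α/N + 1) := by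
    have h1 : α*(x+y) ≤ α := by nlinarith [hxy1, hα0]
    linarith [hβ0]
  have hsq : α^2*(x-y)^2 + 4*z^2 ≤ (2*(α/N+1) - α*(x+y))^2 := by
    have hid2 : (2*(α/N+1) - α*(x+y))^2 - α^2*(x-y)^2
        = 4*((α/N + 1 - α*x)*(α/N + 1 - α*y)) := by ring
    linarith [hmain, hid2]
  have hsqrt : Real.sqrt (α^2*(x-y)^2 + 4*z^2) ≤ 2*(α/N+1) - α*(x+y) := by
    rw [show (2*(α/N+1) - α*(x+y)) = Real.sqrt ((2*(α/N+1) - α*(x+y))^2) from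
      (Real.sqrt_sq (by linarith)).symm]
    exact Real.sqrt_le_sqrt hsq
  linarith [hsqrt]
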